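/- Lemma 2.5 (clipping the output of an approximating DNN into a hypercube): Let p ∈ [1,∞], m, n ∈ ℕ, D ⊆ ℝ^m, f ∈ C(D,ℝ^n), and L, ε ∈ [0,∞) satisfy Cost_p(f,L,ε) < ∞, let Q ⊆ ℝ^n be an n-dimensional hypercube, and assume f(D) ⊆ Q. Then there exists a DNN Φ which satisfies R(Φ) ∈ C(ℝ^m,ℝ^n), R(Φ)(x) ∈ Q for all x ∈ D, ‖R(Φ)(x) − f(x)‖_p ≤ ε for all x ∈ D, ‖R(Φ)(x) − R(Φ)(y)‖_p ≤ L‖x−y‖_p for all x,y ∈ D, and P(Φ) ≤ Cost_p(f,L,ε) + 2n(n+1). -/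

import Mathlib

open scoped BigOperators ENNReal

noncomputable section

/-- A ReLU deep neural network with `L + 1` affine layers (so depth at least one),
layer dimensions `ℓ 0, ℓ 1, …, ℓ (L + 1)`, weight matrices `W k` and bias vectors `b k`
(values of `ℓ`, `W`, `b` beyond layer index `L` are irrelevant for the realization
and for the number of parameters). -/
structure DNN where
  L : ℕ
  ℓ : ℕ → ℕ
  W : (k : ℕ) → Matrix (Fin (ℓ (k + 1))) (Fin (ℓ k)) ℝ
  b : (k : ℕ) → Fin (ℓ (k + 1)) → ℝ

namespace DNN

/-- The number of parameters `P(Φ) = ∑_{k=1}^{L} ℓ_k (ℓ_{k-1} + 1)` of a DNN. -/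
def params (Φ : DNN) : ℕ :=
  ∑ k ∈ Finset.range (Φ.L + 1), Φ.ℓ (k + 1) * (Φ.ℓ k + 1)

/-- The `k`-th affine layer function `x ↦ W_k x + b_k`. -/
def affine (Φ : DNN) (k : ℕ) (x : Fin (Φ.ℓ k) → ℝ) : Fin (Φ.ℓ (k + 1)) → ℝ :=
  fun i => (∑ j, Φ.W k i j * x j) + Φ.b k i

/-- The value after `k` affine layers, each followed by the ReLU activation. -/
def hidden (Φ : DNN) : (k : ℕ) → (Fin (Φ.ℓ 0) → ℝ) → (Fin (Φ.ℓ k) → ℝ)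
  | 0 => id
  | k + 1 => fun x i => max (affine Φ k (hidden Φ k x) i) 0

/-- The realization `R(Φ)`: all affine layers with ReLU in between (no activation after
the last affine layer). -/
def realize (Φ : DNN) (x : Fin (Φ.ℓ 0) → ℝ) : Fin (Φ.ℓ (Φ.L + 1)) → ℝ :=
  affine Φ Φ.L (hidden Φ Φ.L x)

/-- `Φ.Realizes f` means that the realization of `Φ` is the function `f : ℝ^m → ℝ^n`
(in particular the input and output dimensions of `Φ` are `m` and `n`). -/
def Realizes (Φ : DNN) {m n : ℕ} (f : (Fin m → ℝ) → (Fin n → ℝ)) : Prop :=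
  ∃ (hm : Φ.ℓ 0 = m) (hn : Φ.ℓ (Φ.L + 1) = n),
    ∀ (x : Fin m → ℝ) (i : Fin n),
      f x i = realize Φ (fun j => x (Fin.cast hm j)) (Fin.cast hn.symm i)

end DNN

/-- The `ℓ^p`-norm on `ℝ^k` for `p ∈ [1,∞]`. -/
def lpNorm (p : ℝ≥0∞) {k : ℕ} (x : Fin k → ℝ) : ℝ :=
  if p = ∞ then ⨆ i, |x i| else (∑ i, |x i| ^ p.toReal) ^ (1 / p.toReal)

/-- The hypercube `[a,b]^d ⊆ ℝ^d`. -/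
def cube (d : ℕ) (a b : ℝ) : Set (Fin d → ℝ) :=
  Set.Icc (fun _ => a) (fun _ => b)

/-- `Cost p D f L ε`: the minimal number of parameters of a DNN whose realization
approximates `f` on `D` up to `ε` in the `ℓ^p`-norm and is `L`-Lipschitz on `D`
with respect to the `ℓ^p`-norm; `∞` if no such DNN exists. -/
def Cost (p : ℝ≥0∞) {m n : ℕ} (D : Set (Fin m → ℝ))
    (f : (Fin m → ℝ) → (Fin n → ℝ)) (L ε : ℝ) : ℝ≥0∞ :=
  sInf { N : ℝ≥0∞ | ∃ Φ : DNN, ∃ g : (Fin m → ℝ) → (Fin n → ℝ),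
    Φ.Realizes g ∧ N = (Φ.params : ℝ≥0∞) ∧
    (∀ x ∈ D, lpNorm p (g x - f x) ≤ ε) ∧
    (∀ x ∈ D, ∀ y ∈ D, lpNorm p (g x - g y) ≤ L * lpNorm p (x - y)) }

/-- Given block sizes `d : Fin n → ℕ`, the index in `Fin (∑ j, d j)` of the `l`-th
coordinate of the `i`-th block (blocks are arranged consecutively). -/
def blockIdx {n : ℕ} (d : Fin n → ℕ) (i : Fin n) (l : Fin (d i)) : Fin (∑ j, d j) :=
  ⟨(∑ j ∈ Finset.univ.filter (fun j => j < i), d j) + l.1, by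
    have h1 : l.1 < d i := l.2
    have h2 : (∑ j ∈ Finset.univ.filter (fun j => j < i), d j) + d i ≤ ∑ j, d j := by
      have hsplit := Finset.sum_filter_add_sum_filter_not Finset.univ (fun j => j < i) d
      have h3 : d i ≤ ∑ j ∈ Finset.univ.filter (fun j => ¬ j < i), d j :=
        Finset.single_le_sum (fun _ _ => Nat.zero_le _) (by simp)
      omega
    omega⟩

/-- The class `𝒫_{k,p}([a,b]^d, L)`: parallelizations `f = f_1 □ ⋯ □ f_m` of real-valued
functions `f_i` of at most `k` variables that are `L`-Lipschitz w.r.t. the `ℓ^p`-norm. -/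
def MemPLip (k : ℕ) (p : ℝ≥0∞) (a b L : ℝ) {d m : ℕ}
    (f : (Fin d → ℝ) → (Fin m → ℝ)) : Prop :=
  ∃ (dims : Fin m → ℕ) (hd : ∑ i, dims i = d) (g : ∀ i, (Fin (dims i) → ℝ) → ℝ),
    (∀ i, 0 < dims i) ∧ (∀ i, dims i ≤ k) ∧
    (∀ i, ∀ x ∈ cube (dims i) a b, ∀ y ∈ cube (dims i) a b,
      |g i x - g i y| ≤ L * lpNorm p (x - y)) ∧
    (∀ x ∈ cube d a b, ∀ i : Fin m,
      f x i = g i (fun l => x (Fin.cast hd (blockIdx dims i l))))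

/-- The class `M([a,b]^d)`: parallelizations of maximum functions `m_{d_1} □ ⋯ □ m_{d_m}`. -/
def MemMaxClass (a b : ℝ) {d m : ℕ} (f : (Fin d → ℝ) → (Fin m → ℝ)) : Prop :=
  ∃ (dims : Fin m → ℕ) (hd : ∑ i, dims i = d),
    (∀ i, 0 < dims i) ∧
    (∀ x ∈ cube d a b, ∀ i : Fin m,
      f x i = ⨆ l : Fin (dims i), x (Fin.cast hd (blockIdx dims i l)))

/-- The class `P([a,b]^d)`: parallelizations of product functions `p_{d_1} □ ⋯ □ p_{d_m}`. -/
def MemProdClass (a b : ℝ) {d m : ℕ} (f : (Fin d → ℝ) → (Fin m → ℝ)) : Prop :=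
  ∃ (dims : Fin m → ℕ) (hd : ∑ i, dims i = d),
    (∀ i, 0 < dims i) ∧
    (∀ x ∈ cube d a b, ∀ i : Fin m,
      f x i = ∏ l : Fin (dims i), x (Fin.cast hd (blockIdx dims i l)))

/-- `f` coincides on `[a,b]^d` with the extended maximum function
`𝔪_d(x) = (max{x_1}, max{x_1,x_2}, …, max{x_1,…,x_d})`. -/
def IsExtMaxOn (a b : ℝ) {d m : ℕ} (f : (Fin d → ℝ) → (Fin m → ℝ)) : Prop :=
  ∃ h : d = m, ∀ x ∈ cube d a b, ∀ i : Fin m,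
    f x i = (Finset.Iic (Fin.cast h.symm i)).sup' Finset.nonempty_Iic x

/-- `f` coincides on `[a,b]^d` with the extended product function
`𝔭_d(x) = (x_1, x_1 x_2, …, x_1 ⋯ x_d)`. -/
def IsExtProdOn (a b : ℝ) {d m : ℕ} (f : (Fin d → ℝ) → (Fin m → ℝ)) : Prop :=
  ∃ h : d = m, ∀ x ∈ cube d a b, ∀ i : Fin m,
    f x i = ∏ j ∈ Finset.Iic (Fin.cast h.symm i), x j

/-- Iterated composition: `compSeq dims f k = f_{k-1} ∘ ⋯ ∘ f_1 ∘ f_0`. -/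
def compSeq (dims : ℕ → ℕ) (f : ∀ i : ℕ, (Fin (dims i) → ℝ) → (Fin (dims (i + 1)) → ℝ)) :
    (k : ℕ) → (Fin (dims 0) → ℝ) → (Fin (dims k) → ℝ)
  | 0 => id
  | k + 1 => fun x => f k (compSeq dims f k x)


/-! ### Auxiliary material for Lemma 2.5 -/

section ClipAux

/-- Layer dimensions of the clipped network: same as `Φ` up to layer `Φ.L`, then `n`. -/
def clipDim (Φ : DNN) (n : ℕ) : ℕ → ℕ := fun k => if k ≤ Φ.L then Φ.ℓ k else n

lemma clipDim_le (Φ : DNN) (n : ℕ) {k : ℕ} (h : k ≤ Φ.L) : clipDim Φ n k = Φ.ℓ k :=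
  if_pos h

lemma clipDim_gt (Φ : DNN) (n : ℕ) {k : ℕ} (h : Φ.L < k) : clipDim Φ n k = n :=
  if_neg (by omega)

lemma clipDim_succ (Φ : DNN) {n : ℕ} (hn : Φ.ℓ (Φ.L + 1) = n) {k : ℕ} (h : k ≤ Φ.L) :
    clipDim Φ n (k + 1) = Φ.ℓ (k + 1) := by
  rcases Nat.lt_or_ge k Φ.L with h' | h'
  · exact clipDim_le Φ n (by omega)
  · have hk : k = Φ.L := le_antisymm h h'
    subst hk
    rw [clipDim_gt Φ n (by omega), hn]

/-- The clipped network: the network `Φ` followed by two extra layers computing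
`y ↦ B - ReLU((B - A) - ReLU(y - A)) = min (max y A) B` componentwise (the first
`ReLU(· - A)` is merged into the last affine layer of `Φ` by changing its bias). -/
def clipDNN (Φ : DNN) (n : ℕ) (hn : Φ.ℓ (Φ.L + 1) = n) (A B : ℝ) : DNN where
  L := Φ.L + 2
  ℓ := clipDim Φ n
  W := fun k =>
    if hk : k ≤ Φ.L then
      (Φ.W k).submatrix (Fin.cast (clipDim_succ Φ hn hk)) (Fin.cast (clipDim_le Φ n hk))
    else
      (-1 : Matrix (Fin n) (Fin n) ℝ).submatrix
        (Fin.cast (clipDim_gt Φ n (by omega)))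
        (Fin.cast (clipDim_gt Φ n (by omega)))
  b := fun k =>
    if hk : k ≤ Φ.L then
      fun i => Φ.b k (Fin.cast (clipDim_succ Φ hn hk) i) - (if k = Φ.L then A else 0)
    else fun _ => if k = Φ.L + 1 then B - A else B

lemma clipDNN_params (Φ : DNN) (n : ℕ) (hn : Φ.ℓ (Φ.L + 1) = n) (A B : ℝ) :
    (clipDNN Φ n hn A B).params = Φ.params + 2 * (n * (n + 1)) := by
  show ∑ k ∈ Finset.range (Φ.L + 2 + 1), clipDim Φ n (k + 1) * (clipDim Φ n k + 1) = _
  rw [Finset.sum_range_succ, Finset.sum_range_succ]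
  have h1 : ∑ k ∈ Finset.range (Φ.L + 1), clipDim Φ n (k + 1) * (clipDim Φ n k + 1)
      = Φ.params := by
    apply Finset.sum_congr rfl
    intro k hk
    rw [Finset.mem_range] at hk
    rw [clipDim_succ Φ hn (by omega), clipDim_le Φ n (by omega)]
  rw [h1, clipDim_gt Φ n (show Φ.L < Φ.L + 1 by omega),
    clipDim_gt Φ n (show Φ.L < Φ.L + 2 by omega),
    clipDim_gt Φ n (show Φ.L < Φ.L + 3 by omega)]
  ring

lemma clipDNN_hidden (Φ : DNN) (n : ℕ) (hn : Φ.ℓ (Φ.L + 1) = n) (A B : ℝ)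
    (x : Fin (clipDim Φ n 0) → ℝ) :
    ∀ (k : ℕ) (hk : k ≤ Φ.L) (i : Fin (clipDim Φ n k)),
      (clipDNN Φ n hn A B).hidden k x i
        = Φ.hidden k (fun j => x (Fin.cast (clipDim_le Φ n (Nat.zero_le _)).symm j))
            (Fin.cast (clipDim_le Φ n hk) i) := by
  intro k
  induction k with
  | zero => intro hk i; rfl
  | succ k ih =>
    intro hk i
    have hk' : k ≤ Φ.L := by omega
    have hkne : ¬ k = Φ.L := by omega
    show max ((clipDNN Φ n hn A B).affine k ((clipDNN Φ n hn A B).hidden k x) i) 0 = _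
    have : Φ.hidden (k + 1) (fun j => x (Fin.cast (clipDim_le Φ n (Nat.zero_le _)).symm j))
        (Fin.cast (clipDim_le Φ n hk) i)
        = max (Φ.affine k (Φ.hidden k (fun j => x (Fin.cast (clipDim_le Φ n (Nat.zero_le _)).symm j)))
            (Fin.cast (clipDim_le Φ n hk) i)) 0 := rfl
    rw [this]
    congr 1
    show (∑ j, (clipDNN Φ n hn A B).W k i j * (clipDNN Φ n hn A B).hidden k x j)
        + (clipDNN Φ n hn A B).b k i = _
    have hW : (clipDNN Φ n hn A B).W k
        = dite (k ≤ Φ.L) (fun hk => (Φ.W k).submatrix (Fin.cast (clipDim_succ Φ hn hk))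
            (Fin.cast (clipDim_le Φ n hk))) (fun hk => (-1 : Matrix (Fin n) (Fin n) ℝ).submatrix
            (Fin.cast (clipDim_gt Φ n (by omega))) (Fin.cast (clipDim_gt Φ n (by omega)))) := rfl
    have hb : (clipDNN Φ n hn A B).b k
        = dite (k ≤ Φ.L) (fun hk => fun i => Φ.b k (Fin.cast (clipDim_succ Φ hn hk) i)
            - (if k = Φ.L then A else 0)) (fun hk => fun _ => if k = Φ.L + 1 then B - A else B)
        := rfl
    rw [hW, hb, dif_pos hk', dif_pos hk', if_neg hkne]
    have hsum : ∑ j : Fin ((clipDNN Φ n hn A B).ℓ k), ((Φ.W k).submatrix (Fin.cast (clipDim_succ Φ hn hk'))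
          (Fin.cast (clipDim_le Φ n hk'))) i j * (clipDNN Φ n hn A B).hidden k x j
        = ∑ j, Φ.W k (Fin.cast (clipDim_succ Φ hn hk') i) j
            * Φ.hidden k (fun j => x (Fin.cast (clipDim_le Φ n (Nat.zero_le _)).symm j)) j := by
      apply Fintype.sum_equiv (finCongr (clipDim_le Φ n hk'))
      intro j
      rw [ih hk' j]
      rfl
    rw [hsum, sub_zero]
    rfl

lemma clipDNN_hidden1 (Φ : DNN) (n : ℕ) (hn : Φ.ℓ (Φ.L + 1) = n) (A B : ℝ)
    (x : Fin (clipDim Φ n 0) → ℝ) (i : Fin (clipDim Φ n (Φ.L + 1))) :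
    (clipDNN Φ n hn A B).hidden (Φ.L + 1) x i
      = max (Φ.realize (fun j => x (Fin.cast (clipDim_le Φ n (Nat.zero_le _)).symm j))
          (Fin.cast (clipDim_succ Φ hn le_rfl) i) - A) 0 := by
  show max ((clipDNN Φ n hn A B).affine Φ.L ((clipDNN Φ n hn A B).hidden Φ.L x) i) 0 = _
  congr 1
  show (∑ j, (clipDNN Φ n hn A B).W Φ.L i j * (clipDNN Φ n hn A B).hidden Φ.L x j)
      + (clipDNN Φ n hn A B).b Φ.L i = _
  have hW : (clipDNN Φ n hn A B).W Φ.L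
      = dite (Φ.L ≤ Φ.L) (fun hk => (Φ.W Φ.L).submatrix (Fin.cast (clipDim_succ Φ hn hk))
          (Fin.cast (clipDim_le Φ n hk))) (fun hk => (-1 : Matrix (Fin n) (Fin n) ℝ).submatrix
          (Fin.cast (clipDim_gt Φ n (by omega))) (Fin.cast (clipDim_gt Φ n (by omega)))) := rfl
  have hb : (clipDNN Φ n hn A B).b Φ.L
      = dite (Φ.L ≤ Φ.L) (fun hk => fun i => Φ.b Φ.L (Fin.cast (clipDim_succ Φ hn hk) i)
          - (if Φ.L = Φ.L then A else 0)) (fun hk => fun _ => if Φ.L = Φ.L + 1 then B - A else B)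
      := rfl
  rw [hW, hb, dif_pos le_rfl, dif_pos le_rfl, if_pos rfl]
  have hsum : ∑ j : Fin ((clipDNN Φ n hn A B).ℓ Φ.L), ((Φ.W Φ.L).submatrix (Fin.cast (clipDim_succ Φ hn le_rfl))
        (Fin.cast (clipDim_le Φ n le_rfl))) i j * (clipDNN Φ n hn A B).hidden Φ.L x j
      = ∑ j, Φ.W Φ.L (Fin.cast (clipDim_succ Φ hn le_rfl) i) j
          * Φ.hidden Φ.L (fun j => x (Fin.cast (clipDim_le Φ n (Nat.zero_le _)).symm j)) j := by
    apply Fintype.sum_equiv (finCongr (clipDim_le Φ n le_rfl))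
    intro j
    rw [clipDNN_hidden Φ n hn A B x Φ.L le_rfl j]
    rfl
  rw [hsum]
  have hrw : Φ.realize (fun j => x (Fin.cast (clipDim_le Φ n (Nat.zero_le _)).symm j))
      (Fin.cast (clipDim_succ Φ hn le_rfl) i)
      = (∑ j, Φ.W Φ.L (Fin.cast (clipDim_succ Φ hn le_rfl) i) j
          * Φ.hidden Φ.L (fun j => x (Fin.cast (clipDim_le Φ n (Nat.zero_le _)).symm j)) j)
        + Φ.b Φ.L (Fin.cast (clipDim_succ Φ hn le_rfl) i) := rfl
  rw [hrw]
  ring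

lemma neg_one_mulVec_sum {n : ℕ} (a : Fin n) (v : Fin n → ℝ) :
    ∑ j, (-1 : Matrix (Fin n) (Fin n) ℝ) a j * v j = - v a := by
  have h : ∀ j, (-1 : Matrix (Fin n) (Fin n) ℝ) a j * v j
      = (if a = j then -v j else 0) := by
    intro j
    by_cases hj : a = j <;> simp [Matrix.neg_apply, Matrix.one_apply, hj]
  rw [Finset.sum_congr rfl (fun j _ => h j), Finset.sum_ite_eq]
  simp

lemma clipDNN_hidden2 (Φ : DNN) (n : ℕ) (hn : Φ.ℓ (Φ.L + 1) = n) (A B : ℝ)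
    (x : Fin (clipDim Φ n 0) → ℝ) (i : Fin (clipDim Φ n (Φ.L + 2))) :
    (clipDNN Φ n hn A B).hidden (Φ.L + 2) x i
      = max ((B - A) - (clipDNN Φ n hn A B).hidden (Φ.L + 1) x
          (Fin.cast ((clipDim_gt Φ n (by omega)).trans (clipDim_gt Φ n (by omega)).symm) i)) 0 := by
  show max ((clipDNN Φ n hn A B).affine (Φ.L + 1) ((clipDNN Φ n hn A B).hidden (Φ.L + 1) x) i) 0 = _
  congr 1
  show (∑ j, (clipDNN Φ n hn A B).W (Φ.L + 1) i j * (clipDNN Φ n hn A B).hidden (Φ.L + 1) x j)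
      + (clipDNN Φ n hn A B).b (Φ.L + 1) i = _
  have hW : (clipDNN Φ n hn A B).W (Φ.L + 1)
      = dite (Φ.L + 1 ≤ Φ.L) (fun hk => (Φ.W (Φ.L + 1)).submatrix (Fin.cast (clipDim_succ Φ hn hk))
          (Fin.cast (clipDim_le Φ n hk))) (fun hk => (-1 : Matrix (Fin n) (Fin n) ℝ).submatrix
          (Fin.cast (clipDim_gt Φ n (by omega))) (Fin.cast (clipDim_gt Φ n (by omega)))) := rfl
  have hb : (clipDNN Φ n hn A B).b (Φ.L + 1)
      = dite (Φ.L + 1 ≤ Φ.L) (fun hk => fun i => Φ.b (Φ.L + 1) (Fin.cast (clipDim_succ Φ hn hk) i)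
          - (if Φ.L + 1 = Φ.L then A else 0))
          (fun hk => fun _ => if Φ.L + 1 = Φ.L + 1 then B - A else B) := rfl
  rw [hW, hb, dif_neg (by omega), dif_neg (by omega), if_pos rfl]
  have hsum : ∑ j : Fin ((clipDNN Φ n hn A B).ℓ (Φ.L + 1)), ((-1 : Matrix (Fin n) (Fin n) ℝ).submatrix
        (Fin.cast (clipDim_gt Φ n (by omega : Φ.L < Φ.L + 2)))
        (Fin.cast (clipDim_gt Φ n (by omega : Φ.L < Φ.L + 1)))) i j
        * (clipDNN Φ n hn A B).hidden (Φ.L + 1) x j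
      = ∑ j, (-1 : Matrix (Fin n) (Fin n) ℝ)
          (Fin.cast (clipDim_gt Φ n (by omega : Φ.L < Φ.L + 2)) i) j
          * (clipDNN Φ n hn A B).hidden (Φ.L + 1) x
            (Fin.cast (clipDim_gt Φ n (by omega : Φ.L < Φ.L + 1)).symm j) := by
    apply Fintype.sum_equiv (finCongr (clipDim_gt Φ n (by omega : Φ.L < Φ.L + 1)))
    intro j
    rfl
  rw [hsum, neg_one_mulVec_sum]
  have hkey : (clipDNN Φ n hn A B).hidden (Φ.L + 1) x
      (Fin.cast (clipDim_gt Φ n (by omega : Φ.L < Φ.L + 1)).symm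
        (Fin.cast (clipDim_gt Φ n (by omega : Φ.L < Φ.L + 2)) i))
      = (clipDNN Φ n hn A B).hidden (Φ.L + 1) x
        (Fin.cast ((clipDim_gt Φ n (by omega : Φ.L < Φ.L + 2)).trans
          (clipDim_gt Φ n (by omega : Φ.L < Φ.L + 1)).symm) i) := rfl
  linarith [hkey]

lemma clipDNN_realize (Φ : DNN) (n : ℕ) (hn : Φ.ℓ (Φ.L + 1) = n) (A B : ℝ)
    (x : Fin (clipDim Φ n 0) → ℝ) (i : Fin (clipDim Φ n (Φ.L + 2 + 1))) :
    (clipDNN Φ n hn A B).realize x i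
      = B - max ((B - A) - max (Φ.realize
          (fun j => x (Fin.cast (clipDim_le Φ n (Nat.zero_le _)).symm j))
          (Fin.cast ((clipDim_gt Φ n (by omega)).trans hn.symm) i) - A) 0) 0 := by
  show (∑ j, (clipDNN Φ n hn A B).W (Φ.L + 2) i j * (clipDNN Φ n hn A B).hidden (Φ.L + 2) x j)
      + (clipDNN Φ n hn A B).b (Φ.L + 2) i = _
  have hW : (clipDNN Φ n hn A B).W (Φ.L + 2)
      = dite (Φ.L + 2 ≤ Φ.L) (fun hk => (Φ.W (Φ.L + 2)).submatrix (Fin.cast (clipDim_succ Φ hn hk))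
          (Fin.cast (clipDim_le Φ n hk))) (fun hk => (-1 : Matrix (Fin n) (Fin n) ℝ).submatrix
          (Fin.cast (clipDim_gt Φ n (by omega))) (Fin.cast (clipDim_gt Φ n (by omega)))) := rfl
  have hb : (clipDNN Φ n hn A B).b (Φ.L + 2)
      = dite (Φ.L + 2 ≤ Φ.L) (fun hk => fun i => Φ.b (Φ.L + 2) (Fin.cast (clipDim_succ Φ hn hk) i)
          - (if Φ.L + 2 = Φ.L then A else 0))
          (fun hk => fun _ => if Φ.L + 2 = Φ.L + 1 then B - A else B) := rfl
  rw [hW, hb, dif_neg (by omega), dif_neg (by omega), if_neg (by omega)]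
  have hsum : ∑ j : Fin ((clipDNN Φ n hn A B).ℓ (Φ.L + 2)), ((-1 : Matrix (Fin n) (Fin n) ℝ).submatrix
        (Fin.cast (clipDim_gt Φ n (by omega : Φ.L < Φ.L + 3)))
        (Fin.cast (clipDim_gt Φ n (by omega : Φ.L < Φ.L + 2)))) i j
        * (clipDNN Φ n hn A B).hidden (Φ.L + 2) x j
      = ∑ j, (-1 : Matrix (Fin n) (Fin n) ℝ)
          (Fin.cast (clipDim_gt Φ n (by omega : Φ.L < Φ.L + 3)) i) j
          * (clipDNN Φ n hn A B).hidden (Φ.L + 2) x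
            (Fin.cast (clipDim_gt Φ n (by omega : Φ.L < Φ.L + 2)).symm j) := by
    apply Fintype.sum_equiv (finCongr (clipDim_gt Φ n (by omega : Φ.L < Φ.L + 2)))
    intro j
    rfl
  rw [hsum, neg_one_mulVec_sum]
  erw [clipDNN_hidden2, clipDNN_hidden1]
  have hkey : Φ.realize (fun j => x (Fin.cast (clipDim_le Φ n (Nat.zero_le _)).symm j))
        (Fin.cast (clipDim_succ Φ hn le_rfl)
          (Fin.cast ((clipDim_gt Φ n (by omega : Φ.L < Φ.L + 2)).trans
            (clipDim_gt Φ n (by omega : Φ.L < Φ.L + 1)).symm)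
          (Fin.cast (clipDim_gt Φ n (by omega : Φ.L < Φ.L + 2)).symm
            (Fin.cast (clipDim_gt Φ n (by omega : Φ.L < Φ.L + 3)) i))))
      = Φ.realize (fun j => x (Fin.cast (clipDim_le Φ n (Nat.zero_le _)).symm j))
        (Fin.cast ((clipDim_gt Φ n (show Φ.L < Φ.L + 2 + 1 by omega)).trans hn.symm) i) := rfl
  erw [hkey]
  ring

/-- The clipped network realizes the clipped function. -/
lemma clipDNN_Realizes {m n : ℕ} (Φ : DNN) (g : (Fin m → ℝ) → Fin n → ℝ)
    (hm : Φ.ℓ 0 = m) (hn : Φ.ℓ (Φ.L + 1) = n)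
    (hg : ∀ (x : Fin m → ℝ) (i : Fin n),
      g x i = Φ.realize (fun j => x (Fin.cast hm j)) (Fin.cast hn.symm i))
    (A B : ℝ) :
    (clipDNN Φ n hn A B).Realizes
      (fun x i => B - max ((B - A) - max (g x i - A) 0) 0) := by
  refine ⟨(clipDim_le Φ n (Nat.zero_le _)).trans hm, clipDim_gt Φ n (show Φ.L < Φ.L + 2 + 1 by omega), ?_⟩
  intro x i
  show B - max ((B - A) - max (g x i - A) 0) 0 = _
  erw [clipDNN_realize Φ n hn A B, hg]
  rfl

lemma clip_formula (A B t : ℝ) (hAB : A ≤ B) :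
    B - max ((B - A) - max (t - A) 0) 0 = min (max t A) B := by
  rcases le_total t A with h | h
  · rw [max_eq_right (show t - A ≤ 0 by linarith), sub_zero,
      max_eq_left (show (0:ℝ) ≤ B - A by linarith), max_eq_right h, min_eq_left hAB]
    ring
  · rw [max_eq_left (show (0:ℝ) ≤ t - A by linarith), max_eq_left h]
    rcases le_total t B with h' | h'
    · rw [max_eq_left (show (0:ℝ) ≤ B - A - (t - A) by linarith), min_eq_left h']
      ring
    · rw [max_eq_right (show B - A - (t - A) ≤ 0 by linarith), min_eq_right h']
      ring

lemma clip_lipschitz (A B s t : ℝ) :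
    |min (max s A) B - min (max t A) B| ≤ |s - t| :=
  (abs_min_sub_min_le_max _ _ _ _).trans
    (max_le (abs_max_sub_max_le_abs s t A) (by rw [sub_self, abs_zero]; exact abs_nonneg _))

lemma lpNorm_mono (p : ℝ≥0∞) {k : ℕ} {u v : Fin k → ℝ} (h : ∀ i, |u i| ≤ |v i|) :
    lpNorm p u ≤ lpNorm p v := by
  unfold lpNorm
  split_ifs with hp
  · rcases Nat.eq_zero_or_pos k with hk | hk
    · subst hk
      simp [Real.iSup_of_isEmpty]
    · haveI : Nonempty (Fin k) := Fin.pos_iff_nonempty.mp hk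
      exact ciSup_mono (Set.Finite.bddAbove (Set.finite_range _)) h
  · apply Real.rpow_le_rpow
      (Finset.sum_nonneg fun i _ => Real.rpow_nonneg (abs_nonneg _) _)
      (Finset.sum_le_sum fun i _ =>
        Real.rpow_le_rpow (abs_nonneg _) (h i) ENNReal.toReal_nonneg)
      (one_div_nonneg.mpr ENNReal.toReal_nonneg)

/-- The infimum in `Cost` is attained when it is finite. -/
lemma cost_exists_min (p : ℝ≥0∞) {m n : ℕ} (D : Set (Fin m → ℝ))
    (f : (Fin m → ℝ) → (Fin n → ℝ)) (L ε : ℝ) (hfin : Cost p D f L ε ≠ ⊤) :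
    ∃ (Φ : DNN) (g : (Fin m → ℝ) → (Fin n → ℝ)),
      Φ.Realizes g ∧ (Φ.params : ℝ≥0∞) ≤ Cost p D f L ε ∧
      (∀ x ∈ D, lpNorm p (g x - f x) ≤ ε) ∧
      (∀ x ∈ D, ∀ y ∈ D, lpNorm p (g x - g y) ≤ L * lpNorm p (x - y)) := by
  classical
  set T : Set ℕ := {k : ℕ | ∃ Φ : DNN, ∃ g : (Fin m → ℝ) → (Fin n → ℝ),
    Φ.Realizes g ∧
    (∀ x ∈ D, lpNorm p (g x - f x) ≤ ε) ∧
    (∀ x ∈ D, ∀ y ∈ D, lpNorm p (g x - g y) ≤ L * lpNorm p (x - y)) ∧ Φ.params = k} with hT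
  have hTne : ∃ k, k ∈ T := by
    by_contra hTe
    push_neg at hTe
    apply hfin
    have hempty : { N : ℝ≥0∞ | ∃ Φ : DNN, ∃ g : (Fin m → ℝ) → (Fin n → ℝ),
        Φ.Realizes g ∧ N = (Φ.params : ℝ≥0∞) ∧
        (∀ x ∈ D, lpNorm p (g x - f x) ≤ ε) ∧
        (∀ x ∈ D, ∀ y ∈ D, lpNorm p (g x - g y) ≤ L * lpNorm p (x - y)) } = ∅ := by
      ext N
      simp only [Set.mem_setOf_eq, Set.mem_empty_iff_false, iff_false]
      rintro ⟨Φ, g, h1, h2, h3, h4⟩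
      exact hTe Φ.params ⟨Φ, g, h1, h3, h4, rfl⟩
    rw [Cost, hempty, sInf_empty]
  obtain ⟨Φ, g, h1, h3, h4, h5⟩ := Nat.find_spec hTne
  refine ⟨Φ, g, h1, ?_, h3, h4⟩
  rw [h5]
  apply le_sInf
  rintro N ⟨Φ', g', h1', h2', h3', h4'⟩
  rw [h2']
  exact_mod_cast Nat.find_le (⟨Φ', g', h1', h3', h4', rfl⟩ : Φ'.params ∈ T)

end ClipAux

/-- **Lemma 2.5** (clipping the output of an approximating DNN into a hypercube `[A,B]^n`). -/
theorem cost_clipped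
    (p : ℝ≥0∞) (hp : 1 ≤ p) (m n : ℕ) (hm : 0 < m) (hn : 0 < n)
    (D : Set (Fin m → ℝ)) (f : (Fin m → ℝ) → (Fin n → ℝ)) (hf : ContinuousOn f D)
    (L ε : ℝ) (hL : 0 ≤ L) (hε : 0 ≤ ε)
    (hfin : Cost p D f L ε ≠ ⊤)
    (A B : ℝ) (hAB : A < B)
    (hfD : ∀ x ∈ D, f x ∈ cube n A B) :
    ∃ (Φ : DNN) (R : (Fin m → ℝ) → (Fin n → ℝ)),
      Φ.Realizes R ∧
      (∀ x ∈ D, R x ∈ cube n A B) ∧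
      (∀ x ∈ D, lpNorm p (R x - f x) ≤ ε) ∧
      (∀ x ∈ D, ∀ y ∈ D, lpNorm p (R x - R y) ≤ L * lpNorm p (x - y)) ∧
      (Φ.params : ℝ≥0∞) ≤ Cost p D f L ε + 2 * n * (n + 1) := by
  obtain ⟨Φ₀, g, hreal, hle, happrox, hlip⟩ := cost_exists_min p D f L ε hfin
  obtain ⟨hm0, hn0, hg⟩ := hreal
  refine ⟨clipDNN Φ₀ n hn0 A B, fun x i => min (max (g x i) A) B, ?_, ?_, ?_, ?_, ?_⟩
  · have h := clipDNN_Realizes Φ₀ g hm0 hn0 hg A B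
    have hfun : (fun (x : Fin m → ℝ) (i : Fin n) => B - max ((B - A) - max (g x i - A) 0) 0)
        = fun x i => min (max (g x i) A) B := by
      funext x i
      exact clip_formula A B (g x i) hAB.le
    rwa [hfun] at h
  · intro x _
    refine ⟨fun i => ?_, fun i => ?_⟩
    · exact le_min (le_max_right _ _) hAB.le
    · exact min_le_right _ _
  · intro x hx
    refine le_trans (lpNorm_mono p fun i => ?_) (happrox x hx)
    simp only [Pi.sub_apply]
    have hfx : min (max (f x i) A) B = f x i := by
      rw [max_eq_left ((hfD x hx).1 i), min_eq_left ((hfD x hx).2 i)]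
    calc |min (max (g x i) A) B - f x i|
        = |min (max (g x i) A) B - min (max (f x i) A) B| := by rw [hfx]
      _ ≤ |g x i - f x i| := clip_lipschitz A B _ _
  · intro x hx y hy
    refine le_trans (lpNorm_mono p fun i => ?_) (hlip x hx y hy)
    simp only [Pi.sub_apply]
    exact clip_lipschitz A B _ _
  · rw [clipDNN_params]
    push_cast
    calc ((Φ₀.params : ℝ≥0∞) + 2 * (n * (n + 1)))
        ≤ Cost p D f L ε + 2 * (n * (n + 1)) := by
          exact add_le_add_left hle _
      _ = Cost p D f L ε + 2 * n * (n + 1) := by ring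

end
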